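/- For every subgroup H of a finite group G, (|L(H)|²/|L(G)|²)·ssd(H) ≤ ssd(G). -/

import Mathlib

noncomputable def ssd (G : Type*) [Group G] : ℝ :=
  (Nat.card {p : Subgroup G × Subgroup G // ⁅p.1, p.2⁆ = ⊥} : ℝ) /
    (Nat.card (Subgroup G) : ℝ) ^ 2

theorem ssd_subgroup_le (G : Type*) [Group G] [Finite G] (H : Subgroup G) :
    (Nat.card (Subgroup H) : ℝ) ^ 2 / (Nat.card (Subgroup G) : ℝ) ^ 2 * ssd H ≤
      ssd G := by
  have hHpos : 0 < (Nat.card (Subgroup H) : ℝ) := by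
    exact_mod_cast Nat.card_pos
  have hGpos : 0 < (Nat.card (Subgroup G) : ℝ) := by
    exact_mod_cast Nat.card_pos
  have hcard : Nat.card {p : Subgroup H × Subgroup H // ⁅p.1, p.2⁆ = ⊥} ≤
      Nat.card {p : Subgroup G × Subgroup G // ⁅p.1, p.2⁆ = ⊥} := by
    apply Nat.card_le_card_of_injective
      (fun p => ⟨(p.1.1.map H.subtype, p.1.2.map H.subtype), by
        have := p.2
        simp only []
        rw [← Subgroup.map_commutator, this, Subgroup.map_bot]⟩)
    intro a b hab
    have h1 := congrArg (fun q => q.1.1) hab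
    have h2 := congrArg (fun q => q.1.2) hab
    simp only at h1 h2
    have hinj := Subgroup.map_injective (f := H.subtype) H.subtype_injective
    ext1
    exact Prod.ext (hinj h1) (hinj h2)
  unfold ssd
  have heq : (Nat.card (Subgroup H) : ℝ) ^ 2 / (Nat.card (Subgroup G) : ℝ) ^ 2 *
      ((Nat.card {p : Subgroup H × Subgroup H // ⁅p.1, p.2⁆ = ⊥} : ℝ) /
        (Nat.card (Subgroup H) : ℝ) ^ 2) =
      (Nat.card {p : Subgroup H × Subgroup H // ⁅p.1, p.2⁆ = ⊥} : ℝ) /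
        (Nat.card (Subgroup G) : ℝ) ^ 2 := by
    field_simp
  rw [heq]
  gcongr
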